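/- Let 0 ≤ c < 1, ζ ∈ ℝ, C = c·e^{iζ}, and 0 < R < 1 - c. Set r = (1 + R² - c² - sqrt(((1-R)² - c²)·((1+R)² - c²)))/(2R) and a = C/(1 - R·r). Then 0 < r < 1, |a| < 1, and the Möbius transformation M_a(x) = (x - a)/(conj(a)·x - 1) maps the open ball B(C, R) onto the open ball B(0, r). -/

import Mathlib

open Complex

/-- The Möbius transformation `M_a(x) = (x - a) / (conj a * x - 1)`. -/
noncomputable def mobius (a x : ℂ) : ℂ := (x - a) / ((starRingEnd ℂ) a * x - 1)

lemma keyPoly (r R c u x w e f : ℂ) (hu : u = 1 - R*r) (hef : e*f = 1)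
    (hrel : R*(1+r^2) = r*(1+R^2-c^2)) :
    (u*x - c*e)*(u*w - c*f) - r^2*((c*f*x - u)*(c*e*w - u)) =
      (u^2 - r^2*c^2)*((x - c*e)*(w - c*f) - R^2) := by
  subst hu
  linear_combination (R + r - r*c*f*x - r*c*e*w + r*c^2 - r*R^2 - r^2*R) * hrel +
    (2*r*R*c^2 - r^2*c^2*x*w + r^2*c^4 - r^2*R^2*c^2) * hef

set_option maxHeartbeats 1000000 in
theorem mobius_image_ball_to_concentric (c ζ R : ℝ) (hc0 : 0 ≤ c) (hc1 : c < 1)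
    (hR0 : 0 < R) (hR1 : R < 1 - c) :
    ∀ r a, r = (1 + R ^ 2 - c ^ 2 -
        Real.sqrt (((1 - R) ^ 2 - c ^ 2) * ((1 + R) ^ 2 - c ^ 2))) / (2 * R) →
      a = ((c : ℂ) * Complex.exp (Complex.I * ζ)) / (1 - R * r) →
      0 < r ∧ r < 1 ∧ ‖a‖ < 1 ∧
        mobius a '' Metric.ball ((c : ℂ) * Complex.exp (Complex.I * ζ)) R =
          Metric.ball (0 : ℂ) r := by
  intro r a hr ha
  set s : ℝ := Real.sqrt (((1 - R) ^ 2 - c ^ 2) * ((1 + R) ^ 2 - c ^ 2)) with hs_def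
  have hD1 : 0 < (1 - R) ^ 2 - c ^ 2 := by nlinarith
  have hD2 : 0 < (1 + R) ^ 2 - c ^ 2 := by nlinarith
  have hs0 : 0 ≤ s := Real.sqrt_nonneg _
  have hs2 : s ^ 2 = ((1 - R) ^ 2 - c ^ 2) * ((1 + R) ^ 2 - c ^ 2) := by
    rw [hs_def, Real.sq_sqrt (mul_pos hD1 hD2).le]
  have hslt : s < 1 + R ^ 2 - c ^ 2 := by nlinarith
  have hsgt : 1 + R ^ 2 - c ^ 2 - 2 * R < s := by nlinarith
  have hr0 : 0 < r := by
    rw [hr]; exact div_pos (by linarith) (by linarith)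
  have hr1 : r < 1 := by
    rw [hr, div_lt_one (by linarith)]; linarith
  have hrel : R * (1 + r ^ 2) = r * (1 + R ^ 2 - c ^ 2) := by
    rw [hr]; field_simp; nlinarith [hs2]
  have hu : 0 < 1 - R * r := by nlinarith
  have hca : c < 1 - R * r := by
    have hRr : R * r = (1 + R ^ 2 - c ^ 2 - s) / 2 := by
      rw [hr]; field_simp
    rw [hRr]; nlinarith
  have hK : 0 < (1 - R * r) ^ 2 - r ^ 2 * c ^ 2 := by
    have hrc1 : 0 ≤ c * (1 - r) := mul_nonneg hc0 (by linarith)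
    have h5 : 0 < 1 - R * r - r * c := by nlinarith
    have h6 : 0 < 1 - R * r + r * c := by nlinarith [mul_nonneg hr0.le hc0]
    have h7 : (1 - R*r - r*c) * (1 - R*r + r*c) = (1 - R*r)^2 - r^2*c^2 := by ring
    linarith [mul_pos h5 h6, h7.le, h7.ge]
  -- complex setup
  set e : ℂ := Complex.exp (Complex.I * ζ) with he_def
  have habse : ‖e‖ = 1 := by
    rw [he_def, Complex.norm_exp]; simp
  have hef : e * (starRingEnd ℂ) e = 1 := by
    rw [Complex.mul_conj, Complex.normSq_eq_norm_sq, habse]; norm_num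
  have huC : (1 - (R:ℂ) * (r:ℂ)) ≠ 0 := by
    intro h
    have : (1 - R * r : ℝ) = 0 := by exact_mod_cast h
    linarith
  have hA : (1 - (R:ℂ) * (r:ℂ)) * a = (c : ℂ) * e := by
    rw [ha, mul_comm, div_mul_cancel₀ _ huC]
  have hA' : (1 - (R:ℂ) * (r:ℂ)) * (starRingEnd ℂ) a = (c : ℂ) * (starRingEnd ℂ) e := by
    have := congrArg (starRingEnd ℂ) hA
    simpa [Complex.conj_ofReal] using this
  have habsa : ‖a‖ = c / (1 - R * r) := by
    have h := congrArg (‖·‖) hA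
    have hcast : (1 - (R:ℂ) * (r:ℂ)) = ((1 - R * r : ℝ) : ℂ) := by push_cast; ring
    rw [hcast, norm_mul, norm_mul, Complex.norm_real, Complex.norm_real, habse, mul_one,
      Real.norm_eq_abs, Real.norm_eq_abs, _root_.abs_of_pos hu, _root_.abs_of_nonneg hc0] at h
    rw [eq_div_iff hu.ne', mul_comm]
    exact h
  have ha1 : ‖a‖ < 1 := by
    rw [habsa, div_lt_one hu]; exact hca
  have hrelC : (R : ℂ) * (1 + (r:ℂ) ^ 2) = (r:ℂ) * (1 + (R:ℂ) ^ 2 - (c:ℂ) ^ 2) := by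
    exact_mod_cast congrArg (Complex.ofReal) hrel
  -- key identity
  have key : ∀ x : ℂ,
      (Complex.normSq (x - a) - r ^ 2 * Complex.normSq ((starRingEnd ℂ) a * x - 1))
        * (1 - R * r) ^ 2 =
      ((1 - R * r) ^ 2 - r ^ 2 * c ^ 2) *
        (Complex.normSq (x - (c : ℂ) * e) - R ^ 2) := by
    intro x
    have hk := keyPoly (r:ℂ) R c (1 - (R:ℂ)*(r:ℂ)) x ((starRingEnd ℂ) x) e
      ((starRingEnd ℂ) e) rfl hef hrelC
    have h1 : (Complex.normSq (x - a) : ℂ) * (1 - (R:ℂ)*(r:ℂ))^2 =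
        ((1 - (R:ℂ)*(r:ℂ))*x - (c:ℂ)*e) * ((1 - (R:ℂ)*(r:ℂ))*(starRingEnd ℂ) x - (c:ℂ)*(starRingEnd ℂ) e) := by
      rw [← hA, ← hA', ← Complex.mul_conj]
      simp only [map_sub]
      ring
    have h2 : (Complex.normSq ((starRingEnd ℂ) a * x - 1) : ℂ) * (1 - (R:ℂ)*(r:ℂ))^2 =
        ((c:ℂ)*(starRingEnd ℂ) e*x - (1 - (R:ℂ)*(r:ℂ))) * ((c:ℂ)*e*(starRingEnd ℂ) x - (1 - (R:ℂ)*(r:ℂ))) := by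
      rw [← hA, ← hA', ← Complex.mul_conj]
      simp only [map_sub, map_mul, map_one, Complex.conj_conj, Complex.conj_ofReal]
      ring
    have h3 : (Complex.normSq (x - (c:ℂ)*e) : ℂ) =
        (x - (c:ℂ)*e) * ((starRingEnd ℂ) x - (c:ℂ)*(starRingEnd ℂ) e) := by
      rw [← Complex.mul_conj]
      simp only [map_sub, map_mul, Complex.conj_ofReal]
    have hfin : ((Complex.normSq (x - a) - r ^ 2 * Complex.normSq ((starRingEnd ℂ) a * x - 1))
        * (1 - R * r) ^ 2 : ℂ) =
      (((1 - R * r) ^ 2 - r ^ 2 * c ^ 2) *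
        (Complex.normSq (x - (c : ℂ) * e) - R ^ 2) : ℂ) := by
      push_cast
      linear_combination hk + h1 - ((r:ℂ)^2) * h2 - ((1-(R:ℂ)*(r:ℂ))^2 - (r:ℂ)^2*(c:ℂ)^2) * h3
    exact_mod_cast hfin
  have hNa : Complex.normSq a < 1 := by
    rw [Complex.normSq_eq_norm_sq]; nlinarith [norm_nonneg a]
  refine ⟨hr0, hr1, ha1, ?_⟩
  ext z
  simp only [Set.mem_image, Metric.mem_ball, Complex.dist_eq, dist_zero_right]
  constructor
  · rintro ⟨x, hx, rfl⟩
    have hxC : ‖x - (c:ℂ)*e‖ < R := hx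
    have hx1 : ‖x‖ < 1 := by
      calc ‖x‖ ≤ ‖x - (c:ℂ)*e‖ + ‖(c:ℂ)*e‖ := by
            simpa using norm_add_le (x - (c:ℂ)*e) ((c:ℂ)*e)
        _ < R + c := by
            rw [norm_mul, Complex.norm_real, habse, mul_one, Real.norm_eq_abs, _root_.abs_of_nonneg hc0]
            linarith
        _ < 1 := by linarith
    have hd : (starRingEnd ℂ) a * x - 1 ≠ 0 := by
      intro h
      have : ‖(starRingEnd ℂ) a * x‖ = 1 := by
        have : (starRingEnd ℂ) a * x = 1 := by linear_combination h
        rw [this]; simp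
      rw [norm_mul, Complex.norm_conj] at this
      nlinarith [norm_nonneg a, norm_nonneg x]
    have hdpos : 0 < Complex.normSq ((starRingEnd ℂ) a * x - 1) :=
      Complex.normSq_pos.mpr hd
    have hlt : Complex.normSq (x - a) < r ^ 2 * Complex.normSq ((starRingEnd ℂ) a * x - 1) := by
      have hk := key x
      have hxC2 : Complex.normSq (x - (c:ℂ)*e) < R ^ 2 := by
        rw [Complex.normSq_eq_norm_sq]; nlinarith [norm_nonneg (x - (c:ℂ)*e)]
      nlinarith
    have h2 : 0 < ‖(starRingEnd ℂ) a * x - 1‖ := norm_pos_iff.mpr hd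
    rw [mobius, norm_div, div_lt_iff₀ h2]
    nlinarith [Complex.sq_norm (x - a), Complex.sq_norm ((starRingEnd ℂ) a * x - 1),
      norm_nonneg (x - a), mul_pos hr0 h2, hlt]
  · intro hz
    set d : ℂ := (starRingEnd ℂ) a * z - 1 with hd_def
    have hd : d ≠ 0 := by
      rw [hd_def]
      intro h
      have h1 : (starRingEnd ℂ) a * z = 1 := by linear_combination h
      have : ‖(starRingEnd ℂ) a * z‖ = 1 := by rw [h1]; simp
      rw [norm_mul, Complex.norm_conj] at this
      nlinarith [norm_nonneg a, norm_nonneg z]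
    set x : ℂ := mobius a z with hx_def
    have hconj : (starRingEnd ℂ) a * a = (Complex.normSq a : ℂ) := by
      rw [mul_comm, Complex.mul_conj]
    have hN1 : (1 : ℂ) - (Complex.normSq a : ℂ) ≠ 0 := by
      intro h
      have : (Complex.normSq a : ℝ) = 1 := by
        have := sub_eq_zero.mp h
        exact_mod_cast this.symm
      linarith
    have hden : (starRingEnd ℂ) a * x - 1 = ((1:ℂ) - Complex.normSq a) / d := by
      rw [hx_def, mobius, ← hd_def]
      field_simp
      linear_combination -hconj
    have hxa : x - a = z * ((1:ℂ) - Complex.normSq a) / d := by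
      rw [hx_def, mobius, ← hd_def]
      field_simp
      linear_combination -z * hconj
    have hdx : (starRingEnd ℂ) a * x - 1 ≠ 0 := by
      rw [hden]; exact div_ne_zero hN1 hd
    have hmx : mobius a x = z := by
      rw [mobius, hxa, hden]
      field_simp
    have hxa2 : x - a = z * ((starRingEnd ℂ) a * x - 1) := by
      rw [hxa, hden]; ring
    have hnormeq : Complex.normSq (x - a) =
        Complex.normSq z * Complex.normSq ((starRingEnd ℂ) a * x - 1) := by
      rw [hxa2, Complex.normSq_mul]
    have hdpos : 0 < Complex.normSq ((starRingEnd ℂ) a * x - 1) :=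
      Complex.normSq_pos.mpr hdx
    have hz2 : Complex.normSq z < r ^ 2 := by
      rw [Complex.normSq_eq_norm_sq]; nlinarith [norm_nonneg z]
    have hxball : Complex.normSq (x - (c:ℂ)*e) < R ^ 2 := by
      have hk := key x
      rw [hnormeq] at hk
      have hneg : (Complex.normSq z * Complex.normSq ((starRingEnd ℂ) a * x - 1) -
          r ^ 2 * Complex.normSq ((starRingEnd ℂ) a * x - 1)) * (1 - R * r) ^ 2 < 0 := by
        have hfac : (Complex.normSq z * Complex.normSq ((starRingEnd ℂ) a * x - 1) -
            r ^ 2 * Complex.normSq ((starRingEnd ℂ) a * x - 1)) * (1 - R * r) ^ 2 =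
            ((Complex.normSq z - r ^ 2) * Complex.normSq ((starRingEnd ℂ) a * x - 1))
              * (1 - R * r) ^ 2 := by ring
        rw [hfac]
        exact mul_neg_of_neg_of_pos
          (mul_neg_of_neg_of_pos (by linarith) hdpos) (by positivity)
      rw [hk] at hneg
      by_contra hcon
      push_neg at hcon
      exact absurd hneg (not_lt.mpr (mul_nonneg hK.le (by linarith)))
    refine ⟨x, ?_, hmx⟩
    rw [Complex.normSq_eq_norm_sq] at hxball
    exact lt_of_pow_lt_pow_left₀ 2 hR0.le hxball
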